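/- Suppose P : {-1,1}^k → {0,1} does not support any t-wise uniform distribution. Then P is in fact δ-far from supporting a t-wise uniform distribution for some δ > 0; moreover one can take δ ≥ 1/K^{K/2} where K = 1 + Σ_{i=1}^t C(k,i). -/

import Mathlib

open Finset Matrix

namespace TWise

variable {k t : ℕ}
def sgn (b : Bool) : ℝ := if b then 1 else -1
lemma sgn_mul_self (b : Bool) : sgn b * sgn b = 1 := by cases b <;> norm_num [sgn]
lemma sgn_not (b : Bool) : sgn (!b) = - sgn b := by cases b <;> norm_num [sgn]
lemma sgn_ne (a b : Bool) (h : a ≠ b) : sgn a * sgn b = -1 := by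
  cases a <;> cases b <;> simp_all [sgn]

def chi (S : Finset (Fin k)) (z : Fin k → Bool) : ℝ := ∏ i ∈ S, sgn (z i)

lemma chi_pm (S : Finset (Fin k)) (z : Fin k → Bool) : chi S z = 1 ∨ chi S z = -1 := by
  classical
  induction S using Finset.induction with
  | empty => left; simp [chi]
  | insert a s h ih =>
    rw [chi, Finset.prod_insert h]
    rcases ih with h2 | h2 <;> rw [chi] at h2 <;> rw [h2] <;>
      cases ‹Fin k → Bool› ‹Fin k› <;> norm_num [sgn]

def bval (S : Finset (Fin k)) : ℝ := if S = ∅ then 1 else 0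

lemma chi_flip {S : Finset (Fin k)} {i0 : Fin k} (hi0 : i0 ∈ S) (y : Fin k → Bool) :
    chi S (Function.update y i0 (!(y i0))) = - chi S y := by
  classical
  rw [chi, chi, ← Finset.mul_prod_erase _ _ hi0, ← Finset.mul_prod_erase _ _ hi0]
  have h1 : ∀ i ∈ S.erase i0, sgn (Function.update y i0 (!(y i0)) i) = sgn (y i) := by
    intro i hi
    rw [Function.update_of_ne (Finset.ne_of_mem_erase hi)]
  rw [Finset.prod_congr rfl h1, Function.update_self, sgn_not]
  ring

lemma sum_chi_flip {S T : Finset (Fin k)} (hST : S ⊆ T) (hS : S ≠ ∅) :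
    ∑ y ∈ univ.filter (fun y : Fin k → Bool => ∀ i, i ∉ T → y i = false), chi S y = 0 := by
  classical
  obtain ⟨i0, hi0⟩ := Finset.nonempty_iff_ne_empty.mpr hS
  apply Finset.sum_involution (fun y _ => Function.update y i0 (!(y i0)))
  · intro y _
    rw [chi_flip hi0]; ring
  · intro y _ _
    intro hcontra
    have := congrFun hcontra i0
    simp at this
  · intro y _
    funext i
    by_cases h : i = i0
    · subst h; simp
    · simp [Function.update_of_ne h]
  · intro y hy
    simp only [Finset.mem_filter, Finset.mem_univ, true_and] at hy ⊢
    intro i hi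
    have hne : i ≠ i0 := by rintro rfl; exact hi (hST hi0)
    rw [Function.update_of_ne hne]
    exact hy i hi

/-- Lemma A : conditional uniformity implies vanishing Fourier coefficients -/
lemma fourier_of_cond (htk : t ≤ k) (E : (Fin k → Bool) → ℝ)
    (hsum : ∑ z, E z = 1)
    (hT : ∀ T : Finset (Fin k), T.card = t → ∀ y : Fin k → Bool,
      ∑ z ∈ univ.filter (fun z : Fin k → Bool => ∀ i ∈ T, z i = y i), E z = 1 / 2 ^ t) :
    ∀ S : Finset (Fin k), S.card ≤ t → ∑ z, E z * chi S z = bval S := by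
  classical
  intro S hS
  by_cases hSe : S = ∅
  · subst hSe; simp [chi, bval, hsum]
  · rw [bval, if_neg hSe]
    obtain ⟨T, hST, hTcard⟩ := Finset.exists_superset_card_eq hS (by simp [htk])
    set g : (Fin k → Bool) → (Fin k → Bool) := fun z i => if i ∈ T then z i else false with hg
    have hpart := Finset.sum_fiberwise (univ : Finset (Fin k → Bool)) g
      (fun z => E z * chi S z)
    rw [← hpart]
    have hterm : ∀ y : Fin k → Bool,
        (∑ z ∈ univ.filter (fun z => g z = y), E z * chi S z) =
        if (∀ i, i ∉ T → y i = false) then chi S y * (1/2^t) else 0 := by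
      intro y
      by_cases hy : ∀ i, i ∉ T → y i = false
      · rw [if_pos hy]
        have hfeq : univ.filter (fun z => g z = y) =
            univ.filter (fun z : Fin k → Bool => ∀ i ∈ T, z i = y i) := by
          ext z
          simp only [Finset.mem_filter, Finset.mem_univ, true_and]
          constructor
          · intro h i hi
            have := congrFun h i
            simpa [hg, hi] using this
          · intro h
            funext i
            by_cases hi : i ∈ T
            · simpa [hg, hi] using h i hi
            · simp [hg, hi, (hy i hi).symm]
        rw [hfeq]
        have hchi : ∀ z ∈ univ.filter (fun z : Fin k → Bool => ∀ i ∈ T, z i = y i),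
            E z * chi S z = E z * chi S y := by
          intro z hz
          simp only [Finset.mem_filter, Finset.mem_univ, true_and] at hz
          congr 1
          exact Finset.prod_congr rfl (fun i hi => by rw [hz i (hST hi)])
        rw [Finset.sum_congr rfl hchi, ← Finset.sum_mul, hT T hTcard y]
        ring
      · rw [if_neg hy]
        push_neg at hy
        obtain ⟨i, hiT, hyi⟩ := hy
        have : univ.filter (fun z => g z = y) = ∅ := by
          ext z
          simp only [Finset.mem_filter, Finset.mem_univ, true_and, Finset.notMem_empty,
            iff_false]
          intro h
          have := congrFun h i
          simp [hg, hiT] at this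
          exact hyi this
        rw [this, Finset.sum_empty]
    rw [Finset.sum_congr rfl (fun y _ => hterm y), ← Finset.sum_filter, ← Finset.sum_mul,
      sum_chi_flip hST hSe, zero_mul]


/-- Lemma B : vanishing Fourier coefficients implies conditional uniformity -/
lemma cond_of_fourier (E : (Fin k → Bool) → ℝ)
    (hc : ∀ S : Finset (Fin k), S.card ≤ t → ∑ z, E z * chi S z = bval S) :
    ∀ T : Finset (Fin k), T.card = t → ∀ y : Fin k → Bool,
      ∑ z ∈ univ.filter (fun z : Fin k → Bool => ∀ i ∈ T, z i = y i), E z = 1 / 2 ^ t := by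
  classical
  intro T hT y
  have hind : ∀ z : Fin k → Bool, (if (∀ i ∈ T, z i = y i) then E z else 0)
      = E z * ∏ i ∈ T, ((sgn (y i) * sgn (z i) + 1) / 2) := by
    intro z
    by_cases h : ∀ i ∈ T, z i = y i
    · rw [if_pos h]
      have : ∀ i ∈ T, (sgn (y i) * sgn (z i) + 1) / 2 = 1 := by
        intro i hi
        rw [h i hi, sgn_mul_self]; norm_num
      rw [Finset.prod_congr rfl this, Finset.prod_const_one, mul_one]
    · rw [if_neg h]
      push_neg at h
      obtain ⟨i, hi, hne⟩ := h
      have hfac : (sgn (y i) * sgn (z i) + 1) / 2 = 0 := by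
        rw [sgn_ne _ _ (fun hh => hne hh.symm)]; norm_num
      rw [Finset.prod_eq_zero hi hfac, mul_zero]
  have hexp : ∀ z : Fin k → Bool, ∏ i ∈ T, ((sgn (y i) * sgn (z i) + 1) / 2)
      = (∑ U ∈ T.powerset, chi U y * chi U z) / 2 ^ t := by
    intro z
    rw [Finset.prod_div_distrib, Finset.prod_const, hT, Finset.prod_add]
    congr 1
    apply Finset.sum_congr rfl
    intro U _
    rw [Finset.prod_const_one, mul_one, Finset.prod_mul_distrib]
    rfl
  rw [Finset.sum_filter, Finset.sum_congr rfl (fun z _ => hind z)]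
  have : ∑ z : Fin k → Bool, E z * ∏ i ∈ T, ((sgn (y i) * sgn (z i) + 1) / 2)
      = ∑ z : Fin k → Bool, ∑ U ∈ T.powerset, (E z * (chi U y * chi U z)) / 2 ^ t := by
    apply Finset.sum_congr rfl
    intro z _
    rw [hexp z, Finset.sum_div, Finset.mul_sum]
    apply Finset.sum_congr rfl
    intro U _
    ring
  rw [this, Finset.sum_comm]
  have hone : ∀ U ∈ T.powerset, (∑ z : Fin k → Bool, (E z * (chi U y * chi U z)) / 2 ^ t)
      = chi U y * bval U / 2 ^ t := by
    intro U hU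
    have hUc : U.card ≤ t := by
      rw [← hT]; exact Finset.card_le_card (Finset.mem_powerset.mp hU)
    rw [← hc U hUc, Finset.mul_sum, ← Finset.sum_div]
    congr 1
    apply Finset.sum_congr rfl
    intro z _
    ring
  rw [Finset.sum_congr rfl hone, Finset.sum_eq_single (∅ : Finset (Fin k))]
  · simp [chi, bval]
  · intro U _ hUne
    simp [bval, hUne]
  · intro h
    exact absurd (Finset.empty_mem_powerset T) h

/-- trace of a real hermitian matrix equals sum of eigenvalues -/
lemma trace_eq_sum_eig {n : Type*} [Fintype n] [DecidableEq n] {A : Matrix n n ℝ}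
    (hA : A.IsHermitian) : A.trace = ∑ i, hA.eigenvalues i := by
  simpa using hA.trace_eq_sum_eigenvalues

/-- Hadamard inequality for ±1 matrices -/
lemma hadamard_pm {n : Type*} [Fintype n] [DecidableEq n] (N : Matrix n n ℝ)
    (h : ∀ i j, N i j = 1 ∨ N i j = -1) :
    N.det ^ 2 ≤ (Fintype.card n : ℝ) ^ (Fintype.card n) := by
  classical
  set m := Fintype.card n with hm
  rcases Nat.eq_zero_or_pos m with h0 | hpos
  · have : IsEmpty n := Fintype.card_eq_zero_iff.mp h0
    simp [Matrix.det_isEmpty, h0]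
  set G : Matrix n n ℝ := Nᴴ * N with hG
  have hpsd : G.PosSemidef := Matrix.posSemidef_conjTranspose_mul_self N
  have hherm := hpsd.isHermitian
  have hsq : ∀ i j, N i j * N i j = 1 := by
    intro i j; rcases h i j with h1 | h1 <;> rw [h1] <;> norm_num
  -- trace of G is m^2
  have htr : G.trace = (m : ℝ) * m := by
    have hdiag : ∀ i, G i i = (m : ℝ) := by
      intro i
      simp only [hG, Matrix.mul_apply, Matrix.conjTranspose_apply, star_trivial]
      rw [Finset.sum_congr rfl (fun l _ => hsq l i)]
      simp [hm]
    rw [Matrix.trace]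
    simp only [Matrix.diag_apply, hdiag]
    simp [hm, mul_comm]
  -- det of G is det N ^ 2
  have hdet : G.det = N.det ^ 2 := by
    rw [hG, Matrix.det_mul, Matrix.det_conjTranspose, star_trivial, sq]
  -- eigenvalues
  set lam := hherm.eigenvalues with hlam
  have hnn : ∀ i, 0 ≤ lam i := fun i => hpsd.eigenvalues_nonneg i
  have hsum : ∑ i, lam i = (m : ℝ) * m := by
    rw [← trace_eq_sum_eig hherm, htr]
  have hprod : G.det = ∏ i, lam i := by
    have := hherm.det_eq_prod_eigenvalues
    simpa using this
  -- AM-GM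
  have hmpos : (0:ℝ) < m := by exact_mod_cast hpos
  have key : ∏ i, lam i ≤ (m:ℝ) ^ m := by
    have hw : ∀ i ∈ Finset.univ (α := n), (0:ℝ) ≤ (m:ℝ)⁻¹ := fun _ _ => by positivity
    have hw1 : ∑ _i : n, (m:ℝ)⁻¹ = 1 := by
      rw [Finset.sum_const, Finset.card_univ, ← hm, nsmul_eq_mul]
      field_simp
    have := Real.geom_mean_le_arith_mean_weighted Finset.univ (fun _ => (m:ℝ)⁻¹) lam hw hw1
      (fun i _ => hnn i)
    -- this : ∏ i, lam i ^ (m:ℝ)⁻¹ ≤ ∑ i, (m:ℝ)⁻¹ * lam i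
    have hrhs : ∑ i, (m:ℝ)⁻¹ * lam i = (m:ℝ) := by
      rw [← Finset.mul_sum, hsum]; field_simp
    have hlhs : ∏ i, lam i ^ ((m:ℝ)⁻¹) = (∏ i, lam i) ^ ((m:ℝ)⁻¹) := by
      rw [← Real.finset_prod_rpow _ _ (fun i _ => hnn i)]
    have h2 : (∏ i, lam i) ^ ((m:ℝ)⁻¹) ≤ (m:ℝ) := by
      rw [← hlhs]; rw [hrhs] at this; exact this
    have hpn : (0:ℝ) ≤ ∏ i, lam i := Finset.prod_nonneg (fun i _ => hnn i)
    calc ∏ i, lam i = ((∏ i, lam i) ^ ((m:ℝ)⁻¹)) ^ (m:ℝ) := by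
          rw [← Real.rpow_mul hpn, inv_mul_cancel₀ (ne_of_gt hmpos), Real.rpow_one]
      _ ≤ (m:ℝ) ^ (m:ℝ) := by
          apply Real.rpow_le_rpow (Real.rpow_nonneg hpn _) h2 (le_of_lt hmpos)
      _ = (m:ℝ) ^ m := by rw [Real.rpow_natCast]
  calc N.det ^2 = ∏ i, lam i := by rw [← hprod, hdet]
    _ ≤ (m:ℝ)^m := key

open scoped Classical
def Feas (t : ℕ) (E : (Fin k → Bool) → ℝ) : Prop :=
  (∀ z, 0 ≤ E z) ∧ ∀ S : Finset (Fin k), S.card ≤ t → ∑ z, E z * chi S z = bval S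

def obj (P : (Fin k → Bool) → Bool) (E : (Fin k → Bool) → ℝ) : ℝ :=
  ∑ z ∈ univ.filter (fun z => P z = false), E z

def Indep (t : ℕ) (E : (Fin k → Bool) → ℝ) : Prop :=
  LinearIndependent ℝ (fun z : {z : Fin k → Bool // E z ≠ 0} =>
    fun S : {S : Finset (Fin k) // S.card ≤ t} => chi S.1 z.1)

lemma reduce (P : (Fin k → Bool) → Bool) :
    ∀ n : ℕ, ∀ E : (Fin k → Bool) → ℝ, Feas t E →
      (univ.filter (fun z => E z ≠ 0)).card ≤ n →
      ∃ E', Feas t E' ∧ obj P E' ≤ obj P E ∧ Indep t E' := by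
  intro n
  induction n with
  | zero =>
    intro E hF hcard
    refine ⟨E, hF, le_refl _, ?_⟩
    have hempty : ∀ z, ¬ (E z ≠ 0) := by
      intro z hz
      have : z ∈ univ.filter (fun z => E z ≠ 0) := by simp [hz]
      have h2 := Finset.card_pos.mpr ⟨z, this⟩
      omega
    have : IsEmpty {z : Fin k → Bool // E z ≠ 0} := ⟨fun i => hempty i.1 i.2⟩
    exact linearIndependent_empty_type
  | succ n ih =>
    intro E hF hcard
    by_cases hI : Indep t E
    · exact ⟨E, hF, le_refl _, hI⟩
    set Z := univ.filter (fun z => E z ≠ 0) with hZ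
    rw [Indep, Fintype.not_linearIndependent_iff] at hI
    obtain ⟨g, hg0, i0, hgi0⟩ := hI
    set cfun : (Fin k → Bool) → ℝ := fun z => if h : E z ≠ 0 then g ⟨z, h⟩ else 0 with hcfun
    have hc4 : ∀ z, cfun z ≠ 0 → E z ≠ 0 := by
      intro z hz
      by_contra h
      apply hz
      simp [hcfun, h]
    have hc1 : ∀ S : Finset (Fin k), S.card ≤ t → ∑ z, cfun z * chi S z = 0 := by
      intro S hS
      have h1 : ∑ z, cfun z * chi S z = ∑ z ∈ Z, cfun z * chi S z := by
        symm
        apply Finset.sum_subset (Finset.subset_univ _)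
        intro z _ hz
        simp only [hZ, Finset.mem_filter, Finset.mem_univ, true_and, not_not] at hz
        simp [hcfun, hz]
      have h2 : ∑ z ∈ Z, cfun z * chi S z
          = ∑ i : {z : Fin k → Bool // E z ≠ 0}, cfun i.1 * chi S i.1 := by
        apply Finset.sum_subtype
        intro z
        simp [hZ]
      have h3 : ∀ i : {z : Fin k → Bool // E z ≠ 0}, cfun i.1 * chi S i.1 = g i * chi S i.1 := by
        intro i
        simp [hcfun, i.2]
      have h4 := congrFun hg0 ⟨S, hS⟩
      simp only [Finset.sum_apply, Pi.smul_apply, smul_eq_mul, Pi.zero_apply] at h4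
      rw [h1, h2, Finset.sum_congr rfl (fun i _ => h3 i), h4]
    have hc3 : cfun i0.1 ≠ 0 := by
      simpa [hcfun, i0.2] using hgi0
    -- choose direction with nonpositive objective
    obtain ⟨d, hd1, hd3, hd4, hd5⟩ :
        ∃ d : (Fin k → Bool) → ℝ,
          (∀ S : Finset (Fin k), S.card ≤ t → ∑ z, d z * chi S z = 0) ∧
          (d i0.1 ≠ 0) ∧ (∀ z, d z ≠ 0 → E z ≠ 0) ∧ obj P d ≤ 0 := by
      by_cases h : obj P cfun ≤ 0
      · exact ⟨cfun, hc1, hc3, hc4, h⟩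
      · refine ⟨fun z => -cfun z, ?_, by simpa using hc3, ?_, ?_⟩
        · intro S hS
          have := hc1 S hS
          simp only [neg_mul]
          rw [Finset.sum_neg_distrib, this, neg_zero]
        · intro z hz
          apply hc4
          simpa using hz
        · rw [obj]
          rw [show (∑ z ∈ univ.filter (fun z => P z = false), -cfun z)
              = -∑ z ∈ univ.filter (fun z => P z = false), cfun z from by
            rw [← Finset.sum_neg_distrib]]
          rw [obj] at h
          linarith
    -- sum of d is zero
    have hdsum : ∑ z, d z = 0 := by
      have := hd1 ∅ (by simp)
      simpa [chi] using this
    -- d has a negative entry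
    have hneg : ∃ z0, d z0 < 0 := by
      by_contra h
      push_neg at h
      have hall := (Finset.sum_eq_zero_iff_of_nonneg (fun z _ => h z)).mp hdsum
      exact hd3 (hall i0.1 (Finset.mem_univ _))
    set Neg := univ.filter (fun z => d z < 0) with hNeg
    have hNegne : Neg.Nonempty := by
      obtain ⟨z0, hz0⟩ := hneg
      exact ⟨z0, by simp [hNeg, hz0]⟩
    obtain ⟨zs, hzsmem, hzsmin⟩ := Finset.exists_min_image Neg (fun z => E z / (-d z)) hNegne
    have hdzs : d zs < 0 := by
      simpa [hNeg] using hzsmem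
    have hdzsne : d zs ≠ 0 := ne_of_lt hdzs
    have hEzs : E zs ≠ 0 := hd4 zs hdzsne
    set θ : ℝ := E zs / (-d zs) with hθ
    have hθ0 : 0 ≤ θ := div_nonneg (hF.1 zs) (by linarith)
    set E' : (Fin k → Bool) → ℝ := fun z => E z + θ * d z with hE'
    have hE'nn : ∀ z, 0 ≤ E' z := by
      intro z
      by_cases h : d z < 0
      · have hmem : z ∈ Neg := by simp [hNeg, h]
        have := hzsmin z hmem
        rw [hE']
        have h2 : θ * (-d z) ≤ E z := by
          rw [hθ]
          calc E zs / (-d zs) * (-d z) ≤ E z / (-d z) * (-d z) := by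
                apply mul_le_mul_of_nonneg_right this (by linarith)
            _ = E z := div_mul_cancel₀ _ (by linarith)
        show (0:ℝ) ≤ E z + θ * d z
        nlinarith
      · push_neg at h
        exact add_nonneg (hF.1 z) (mul_nonneg hθ0 (by linarith))
    have hE'c : ∀ S : Finset (Fin k), S.card ≤ t → ∑ z, E' z * chi S z = bval S := by
      intro S hS
      have : ∀ z, E' z * chi S z = E z * chi S z + θ * (d z * chi S z) := by
        intro z; rw [hE']; ring
      rw [Finset.sum_congr rfl (fun z _ => this z), Finset.sum_add_distrib, ← Finset.mul_sum,
        hd1 S hS, hF.2 S hS, mul_zero, add_zero]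
    have hobj' : obj P E' ≤ obj P E := by
      rw [obj, obj]
      have : ∀ z, E' z = E z + θ * d z := fun z => rfl
      rw [Finset.sum_congr rfl (fun z _ => this z), Finset.sum_add_distrib, ← Finset.mul_sum]
      have : θ * ∑ z ∈ univ.filter (fun z => P z = false), d z ≤ 0 :=
        mul_nonpos_of_nonneg_of_nonpos hθ0 hd5
      linarith
    have hE'zs : E' zs = 0 := by
      show E zs + θ * d zs = 0
      rw [hθ, div_mul_eq_mul_div, mul_div_assoc, div_neg, div_self hdzsne]
      ring
    have hsupp : univ.filter (fun z => E' z ≠ 0) ⊆ Z.erase zs := by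
      intro z hz
      simp only [Finset.mem_filter, Finset.mem_univ, true_and] at hz
      rw [Finset.mem_erase]
      constructor
      · rintro rfl; exact hz hE'zs
      · simp only [hZ, Finset.mem_filter, Finset.mem_univ, true_and]
        intro h
        apply hz
        have hdz : d z = 0 := by
          by_contra hdz
          exact hd4 z hdz h
        show E z + θ * d z = 0
        rw [h, hdz]; ring
    have hcard' : (univ.filter (fun z => E' z ≠ 0)).card ≤ n := by
      have h1 := Finset.card_le_card hsupp
      have hzsZ : zs ∈ Z := by simp [hZ, hEzs]
      have h2 := Finset.card_erase_of_mem hzsZ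
      omega
    obtain ⟨E'', hF'', hobj'', hI''⟩ := ih E' ⟨hE'nn, hE'c⟩ hcard'
    exact ⟨E'', hF'', le_trans hobj'' hobj', hI''⟩

def Kc (k t : ℕ) : ℕ := Fintype.card {S : Finset (Fin k) // S.card ≤ t}

lemma sum_support_eq (E : (Fin k → Bool) → ℝ) (f : (Fin k → Bool) → ℝ) :
    ∑ i : {z : Fin k → Bool // E z ≠ 0}, E i.1 * f i.1 = ∑ z, E z * f z := by
  rw [← Finset.sum_subtype (univ.filter (fun z => E z ≠ 0))
    (fun z => by simp) (fun z => E z * f z)]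
  apply Finset.sum_subset (Finset.subset_univ _)
  intro z _ hz
  simp only [Finset.mem_filter, Finset.mem_univ, true_and, not_not] at hz
  rw [hz, zero_mul]

lemma indep_bound (E : (Fin k → Bool) → ℝ) (hF : Feas t E) (hI : Indep t E) :
    ∀ z0, E z0 ≠ 0 → 1 / Real.sqrt ((Kc k t : ℝ) ^ (Kc k t)) ≤ E z0 := by
  classical
  intro z0 hz0
  set m := Fintype.card {z : Fin k → Bool // E z ≠ 0} with hm
  -- m ≤ Kc
  have hmK : m ≤ Kc k t := by
    have h1 := hI.fintype_card_le_finrank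
    rwa [Module.finrank_fintype_fun_eq_card] at h1
  have hKc1 : 1 ≤ Kc k t := by
    have : 0 < Fintype.card {S : Finset (Fin k) // S.card ≤ t} :=
      Fintype.card_pos_iff.mpr ⟨⟨∅, by simp⟩⟩
    rw [Kc]
    omega
  -- rows span everything
  set R : {S : Finset (Fin k) // S.card ≤ t} → ({z : Fin k → Bool // E z ≠ 0} → ℝ) :=
    fun S z => chi S.1 z.1 with hR
  have hspan : Submodule.span ℝ (Set.range R) = ⊤ := by
    by_contra hne
    obtain ⟨f, hf0, hfker⟩ := Submodule.exists_le_ker_of_lt_top _ (lt_top_iff_ne_top.mpr hne)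
    set v0 : {z : Fin k → Bool // E z ≠ 0} → ℝ := fun z => f (Pi.single z 1) with hv0
    have hfx : ∀ x, f x = ∑ z, x z * v0 z := by
      intro x
      conv_lhs => rw [pi_eq_sum_univ x]
      rw [map_sum]
      apply Finset.sum_congr rfl
      intro z _
      rw [f.map_smul, smul_eq_mul]
      congr 1
      rw [hv0]
      congr 1
      funext j
      simp [Pi.single_apply, eq_comm]
    have hv0sum : ∑ z, v0 z • (fun S : {S : Finset (Fin k) // S.card ≤ t} => chi S.1 z.1)
        = 0 := by
      funext S
      simp only [Finset.sum_apply, Pi.smul_apply, smul_eq_mul, Pi.zero_apply]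
      have : f (R S) = 0 := hfker (Submodule.subset_span (Set.mem_range_self S))
      rw [hfx (R S)] at this
      have h2 : ∑ x : {z : Fin k → Bool // E z ≠ 0}, v0 x * chi S.1 x.1
          = ∑ z, R S z * v0 z := Finset.sum_congr rfl (fun z _ => mul_comm _ _)
      exact h2.trans this
    have := Fintype.linearIndependent_iff.mp hI v0 ?_
    · apply hf0
      apply LinearMap.ext
      intro x
      rw [hfx x]
      simp only [LinearMap.zero_apply]
      apply Finset.sum_eq_zero
      intro z _
      rw [this z, mul_zero]
    · exact hv0sum
  -- extract basis
  obtain ⟨bs, hbsub, hbspan, hbli⟩ := exists_linearIndependent ℝ (Set.range R)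
  rw [hspan] at hbspan
  have hbfin : bs.Finite := hbli.setFinite
  letI : Fintype bs := hbfin.fintype
  have hB : Module.finrank ℝ ({z : Fin k → Bool // E z ≠ 0} → ℝ) = Fintype.card bs :=
    Module.finrank_eq_card_basis (Module.Basis.mk hbli (by rw [Subtype.range_coe, hbspan]))
  have hcard : Fintype.card {z : Fin k → Bool // E z ≠ 0} = Fintype.card bs := by
    rw [← hB, Module.finrank_fintype_fun_eq_card]
  set e : {z : Fin k → Bool // E z ≠ 0} ≃ bs := Fintype.equivOfCardEq hcard with he
  -- the square matrix
  set N : Matrix {z : Fin k → Bool // E z ≠ 0} {z : Fin k → Bool // E z ≠ 0} ℝ :=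
    fun i z => (e i : {z : Fin k → Bool // E z ≠ 0} → ℝ) z with hN
  have hSfun : ∀ i, ∃ S, R S = (e i : {z : Fin k → Bool // E z ≠ 0} → ℝ) :=
    fun i => hbsub (e i).2
  set Sfun : {z : Fin k → Bool // E z ≠ 0} → {S : Finset (Fin k) // S.card ≤ t} :=
    fun i => Classical.choose (hSfun i) with hSfun'
  have hSspec : ∀ i, R (Sfun i) = (e i : {z : Fin k → Bool // E z ≠ 0} → ℝ) :=
    fun i => Classical.choose_spec (hSfun i)
  have hNentry : ∀ i z, N i z = chi (Sfun i).1 z.1 := by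
    intro i z
    have h1 : N i z = (e i : {z : Fin k → Bool // E z ≠ 0} → ℝ) z := rfl
    rw [h1, ← hSspec i]
  set c : {z : Fin k → Bool // E z ≠ 0} → ℝ := fun i => bval (Sfun i).1 with hcvec
  set x : {z : Fin k → Bool // E z ≠ 0} → ℝ := fun z => E z.1 with hx
  have hsys : N.mulVec x = c := by
    funext i
    rw [Matrix.mulVec, dotProduct]
    have : ∀ z : {z : Fin k → Bool // E z ≠ 0}, N i z * x z = E z.1 * chi (Sfun i).1 z.1 := by
      intro z
      rw [hNentry i z, hx]
      ring
    rw [Finset.sum_congr rfl (fun z _ => this z), sum_support_eq E (chi (Sfun i).1)]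
    exact hF.2 (Sfun i).1 (Sfun i).2
  -- injectivity of mulVec
  have hinj : ∀ w, N.mulVec w = 0 → w = 0 := by
    intro w hw
    set φ : ({z : Fin k → Bool // E z ≠ 0} → ℝ) →ₗ[ℝ] ℝ :=
      ∑ z, w z • (LinearMap.proj z) with hφ
    have hφap : ∀ u, φ u = ∑ z, w z * u z := by
      intro u
      rw [hφ]
      simp [LinearMap.sum_apply, LinearMap.proj_apply]
    have hφ0 : ∀ u ∈ bs, φ u = 0 := by
      intro u hu
      have hiu : (e (e.symm ⟨u, hu⟩) : {z : Fin k → Bool // E z ≠ 0} → ℝ) = u := by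
        rw [Equiv.apply_symm_apply]
      have hthis := congrFun hw (e.symm ⟨u, hu⟩)
      rw [Matrix.mulVec, dotProduct, Pi.zero_apply] at hthis
      rw [hφap]
      have h3 : ∀ z, N (e.symm ⟨u, hu⟩) z = u z := by
        intro z
        have h4 : N (e.symm ⟨u, hu⟩) z
            = (e (e.symm ⟨u, hu⟩) : {z : Fin k → Bool // E z ≠ 0} → ℝ) z := rfl
        rw [h4, hiu]
      calc ∑ z, w z * u z = ∑ i, N (e.symm ⟨u, hu⟩) i * w i :=
            Finset.sum_congr rfl (fun z _ => by rw [h3 z]; ring)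
        _ = 0 := hthis
    have hφz : φ = 0 := LinearMap.ext_on hbspan hφ0
    funext z
    have h5 : φ (Pi.single z 1) = 0 := by rw [hφz]; rfl
    rw [hφap] at h5
    have h6 : ∑ z', w z' * (Pi.single z 1 : {z : Fin k → Bool // E z ≠ 0} → ℝ) z' = w z := by
      rw [Finset.sum_eq_single z]
      · simp
      · intro b _ hb
        simp [Pi.single_apply, hb]
      · intro h
        exact absurd (Finset.mem_univ z) h
    rw [Pi.zero_apply]
    rw [← h6]
    exact h5
  have hdet : N.det ≠ 0 := by
    intro h0
    obtain ⟨w, hw0, hww⟩ := (Matrix.exists_mulVec_eq_zero_iff).mpr h0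
    exact hw0 (hinj w hww)
  -- Cramer
  have hcram : N.cramer c = N.det • x := by
    have h1 : N.mulVec (N.cramer c) = N.det • c := Matrix.mulVec_cramer N c
    have h2 : N.mulVec (N.det • x) = N.det • c := by
      rw [Matrix.mulVec_smul, hsys]
    have := sub_eq_zero.mpr (h1.trans h2.symm)
    rw [← Matrix.mulVec_sub] at this
    have := hinj _ this
    have := sub_eq_zero.mp this
    exact this
  -- integer matrices
  set z0' : {z : Fin k → Bool // E z ≠ 0} := ⟨z0, hz0⟩ with hz0'
  set Nint : Matrix {z : Fin k → Bool // E z ≠ 0} {z : Fin k → Bool // E z ≠ 0} ℤ :=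
    fun i j => if N i j = 1 then 1 else -1 with hNint
  have hNmap : ∀ i j, N i j = ((Nint i j : ℤ) : ℝ) := by
    intro i j
    have hN1 : Nint i j = if N i j = 1 then 1 else -1 := rfl
    rw [hN1]
    rcases chi_pm (Sfun i).1 j.1 with h | h <;> rw [hNentry i j, h] <;> norm_num
  have hNmap' : N = Nint.map (Int.cast : ℤ → ℝ) := by
    funext i j
    rw [Matrix.map_apply]
    exact hNmap i j
  set Mi : Matrix {z : Fin k → Bool // E z ≠ 0} {z : Fin k → Bool // E z ≠ 0} ℤ :=
    fun i j => if j = z0' then (if (Sfun i).1 = ∅ then 1 else 0) else Nint i j with hMi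
  have hMmap : N.updateCol z0' c = Mi.map (Int.cast : ℤ → ℝ) := by
    funext i j
    rw [Matrix.updateCol_apply, Matrix.map_apply]
    have hMi1 : Mi i j = if j = z0' then (if (Sfun i).1 = ∅ then 1 else 0) else Nint i j := rfl
    rw [hMi1]
    by_cases hj : j = z0'
    · rw [if_pos hj, if_pos hj]
      by_cases hS : (Sfun i).1 = ∅ <;> simp [hcvec, bval, hS]
    · rw [if_neg hj, if_neg hj]
      exact hNmap i j
  have hdetN : N.det = ((Nint.det : ℤ) : ℝ) := by
    rw [hNmap']
    exact (RingHom.map_det (Int.castRingHom ℝ) Nint).symm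
  have hdetM : (N.updateCol z0' c).det = ((Mi.det : ℤ) : ℝ) := by
    rw [hMmap]
    exact (RingHom.map_det (Int.castRingHom ℝ) Mi).symm
  -- key equation
  have hkey : ((Mi.det : ℤ) : ℝ) = N.det * E z0 := by
    have h1 := congrFun hcram z0'
    rw [Matrix.cramer_apply] at h1
    rw [← hdetM]
    rw [h1, Pi.smul_apply, smul_eq_mul]
  have hEpos : 0 < E z0 := lt_of_le_of_ne (hF.1 z0) (Ne.symm hz0)
  have hMine : Mi.det ≠ 0 := by
    intro h0
    rw [h0] at hkey
    simp only [Int.cast_zero] at hkey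
    have := mul_ne_zero hdet hz0
    exact this hkey.symm
  have hnum1 : (1:ℝ) ≤ |((Mi.det : ℤ) : ℝ)| := by
    have := Int.one_le_abs hMine
    calc (1:ℝ) = ((1:ℤ) : ℝ) := by norm_num
      _ ≤ ((|Mi.det| : ℤ) : ℝ) := by exact_mod_cast this
      _ = |((Mi.det : ℤ) : ℝ)| := by simp [Int.cast_abs]
  have habs : |((Mi.det : ℤ) : ℝ)| = |N.det| * E z0 := by
    rw [hkey, abs_mul, abs_of_pos hEpos]
  -- Hadamard bound
  have hH := hadamard_pm N (fun i j => by rw [hNentry i j]; exact chi_pm _ _)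
  have habs2 : |N.det| ≤ Real.sqrt ((m:ℝ)^m) := by
    rw [← Real.sqrt_sq_eq_abs]
    exact Real.sqrt_le_sqrt hH
  have hmono : ((m:ℝ))^m ≤ ((Kc k t : ℝ))^(Kc k t) := by
    have h1 : m^m ≤ (Kc k t)^(Kc k t) :=
      le_trans (Nat.pow_le_pow_left hmK m) (Nat.pow_le_pow_right hKc1 hmK)
    exact_mod_cast h1
  have hfin2 : |N.det| ≤ Real.sqrt ((Kc k t : ℝ)^(Kc k t)) :=
    le_trans habs2 (Real.sqrt_le_sqrt hmono)
  have hdpos : 0 < |N.det| := abs_pos.mpr hdet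
  calc 1 / Real.sqrt ((Kc k t : ℝ)^(Kc k t)) ≤ 1 / |N.det| :=
        one_div_le_one_div_of_le hdpos hfin2
    _ ≤ |((Mi.det : ℤ) : ℝ)| / |N.det| := (div_le_div_iff_of_pos_right hdpos).mpr hnum1
    _ = E z0 := by
        rw [habs, mul_comm, mul_div_assoc, div_self (ne_of_gt hdpos), mul_one]

lemma count_Kc : Kc k t = 1 + ∑ i ∈ Finset.Icc 1 t, Nat.choose k i := by
  classical
  rw [Kc, Fintype.card_subtype]
  have h1 : (univ.filter (fun S : Finset (Fin k) => S.card ≤ t))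
      = (Finset.range (t+1)).biUnion
          (fun i => univ.filter (fun S : Finset (Fin k) => S.card = i)) := by
    ext S
    simp [Nat.lt_succ_iff]
  rw [h1, Finset.card_biUnion]
  · have h2 : ∀ i, (univ.filter (fun S : Finset (Fin k) => S.card = i)).card
        = Nat.choose k i := by
      intro i
      have : univ.filter (fun S : Finset (Fin k) => S.card = i)
          = Finset.powersetCard i (univ : Finset (Fin k)) := by
        ext S
        simp [Finset.mem_powersetCard, Finset.subset_univ]
      rw [this, Finset.card_powersetCard, Finset.card_univ, Fintype.card_fin]
    rw [Finset.sum_congr rfl (fun i _ => h2 i)]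
    have h3 : Finset.range (t+1) = insert 0 (Finset.Icc 1 t) := by
      ext i
      simp [Nat.lt_succ_iff]
      omega
    rw [h3, Finset.sum_insert (by simp), Nat.choose_zero_right]
  · intro a _ b _ hab
    simp only [Finset.disjoint_left, Finset.mem_filter]
    rintro S ⟨_, h⟩ ⟨_, h'⟩
    exact hab (h ▸ h')


end TWise

/-- if `P : {-1,1}^k → {0,1}` does not support any t-wise uniform
distribution, then it is δ-far from supporting one for `δ = 1 / K^(K/2)` where
`K = 1 + Σ_{i=1}^t C(k,i)`: every t-wise uniform distribution puts probability mass
at least `1 / K^(K/2)` on `P⁻¹(0)`. -/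
theorem not_supporting_implies_far {k t : ℕ} (P : (Fin k → Bool) → Bool)
    (hns : ¬ ∃ D : (Fin k → Bool) → ℝ,
        (∀ z, 0 ≤ D z) ∧ (∑ z, D z = 1) ∧
        (∀ T : Finset (Fin k), T.card = t → ∀ y : Fin k → Bool,
          ∑ z ∈ Finset.univ.filter (fun z : Fin k → Bool => ∀ i ∈ T, z i = y i), D z
            = 1 / 2 ^ t) ∧
        (∀ z, D z ≠ 0 → P z = true)) :
    ∀ D : (Fin k → Bool) → ℝ,
      (∀ z, 0 ≤ D z) → (∑ z, D z = 1) →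
      (∀ T : Finset (Fin k), T.card = t → ∀ y : Fin k → Bool,
        ∑ z ∈ Finset.univ.filter (fun z : Fin k → Bool => ∀ i ∈ T, z i = y i), D z
          = 1 / 2 ^ t) →
      1 / ((1 + ∑ i ∈ Finset.Icc 1 t, Nat.choose k i : ℝ)
            ^ (((1 + ∑ i ∈ Finset.Icc 1 t, Nat.choose k i : ℕ) : ℝ) / 2))
        ≤ ∑ z ∈ Finset.univ.filter (fun z : Fin k → Bool => P z = false), D z := by
  classical
  intro D hnn hsum hcond
  -- rewrite the bound
  have hc : (1 + ∑ i ∈ Finset.Icc 1 t, Nat.choose k i : ℕ) = TWise.Kc k t :=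
    (TWise.count_Kc).symm
  have hKc1 : 1 ≤ TWise.Kc k t := by
    rw [← hc]; omega
  have hb : (1 + ∑ i ∈ Finset.Icc 1 t, Nat.choose k i : ℝ) = ((TWise.Kc k t : ℕ) : ℝ) := by
    rw [← hc]; push_cast; ring
  have hrw : (1 + ∑ i ∈ Finset.Icc 1 t, Nat.choose k i : ℝ)
        ^ (((1 + ∑ i ∈ Finset.Icc 1 t, Nat.choose k i : ℕ) : ℝ) / 2)
      = Real.sqrt ((TWise.Kc k t : ℝ) ^ (TWise.Kc k t)) := by
    rw [hb, hc, Real.sqrt_eq_rpow, ← Real.rpow_natCast ((TWise.Kc k t : ℝ)) (TWise.Kc k t),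
      ← Real.rpow_mul (by positivity)]
    congr 1
    ring
  rw [hrw]
  have hsqrt1 : 1 ≤ Real.sqrt ((TWise.Kc k t : ℝ) ^ (TWise.Kc k t)) := by
    rw [show (1:ℝ) = Real.sqrt 1 from (Real.sqrt_one).symm]
    apply Real.sqrt_le_sqrt
    have : (1:ℝ) ≤ (TWise.Kc k t : ℝ) := by exact_mod_cast hKc1
    calc (1:ℝ) = 1 ^ (TWise.Kc k t) := (one_pow _).symm
      _ ≤ (TWise.Kc k t : ℝ) ^ (TWise.Kc k t) := pow_le_pow_left₀ (by norm_num) this _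
  have hsqrtpos : 0 < Real.sqrt ((TWise.Kc k t : ℝ) ^ (TWise.Kc k t)) := by linarith
  by_cases hkt : t ≤ k
  · -- main case
    have hFeas : TWise.Feas t D := ⟨hnn, TWise.fourier_of_cond hkt D hsum hcond⟩
    obtain ⟨E', hF', hobj', hI'⟩ := TWise.reduce P (univ.filter (fun z => D z ≠ 0)).card D
      hFeas (le_refl _)
    by_cases hex : ∃ z, E' z ≠ 0 ∧ P z = false
    · obtain ⟨z0, hz0, hz0P⟩ := hex
      have h1 := TWise.indep_bound E' hF' hI' z0 hz0
      have h2 : E' z0 ≤ TWise.obj P E' := by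
        apply Finset.single_le_sum (f := E') (fun i _ => hF'.1 i)
        simp [hz0P]
      have h3 : TWise.obj P D = ∑ z ∈ Finset.univ.filter
          (fun z : Fin k → Bool => P z = false), D z := rfl
      rw [← h3]
      calc 1 / Real.sqrt ((TWise.Kc k t : ℝ) ^ (TWise.Kc k t)) ≤ E' z0 := h1
        _ ≤ TWise.obj P E' := h2
        _ ≤ TWise.obj P D := hobj'
    · exfalso
      apply hns
      push_neg at hex
      refine ⟨E', hF'.1, ?_, TWise.cond_of_fourier E' hF'.2, ?_⟩
      · have := hF'.2 ∅ (by simp)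
        simpa [TWise.chi, TWise.bval] using this
      · intro z hz
        have := hex z hz
        simp only [Bool.not_eq_false] at this
        exact this
  · -- degenerate case t > k : conditions on T are vacuous
    by_contra hlt
    push_neg at hlt
    set σ := ∑ z ∈ Finset.univ.filter (fun z : Fin k → Bool => P z = false), D z with hσ
    have hσ0 : 0 ≤ σ := Finset.sum_nonneg (fun z _ => hnn z)
    have hσ1 : σ < 1 := by
      have hb1 : 1 / Real.sqrt ((TWise.Kc k t : ℝ) ^ (TWise.Kc k t)) ≤ 1 := by
        rw [div_le_one hsqrtpos]
        exact hsqrt1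
      calc σ < 1 / Real.sqrt ((TWise.Kc k t : ℝ) ^ (TWise.Kc k t)) := hlt
        _ ≤ 1 := hb1
    have htrue : ∑ z ∈ Finset.univ.filter (fun z : Fin k → Bool => P z = true), D z
        = 1 - σ := by
      have := Finset.sum_filter_add_sum_filter_not (Finset.univ : Finset (Fin k → Bool))
        (fun z => P z = true) D
      rw [hsum] at this
      have h4 : Finset.univ.filter (fun z : Fin k → Bool => ¬ P z = true)
          = Finset.univ.filter (fun z : Fin k → Bool => P z = false) := by
        ext z
        simp [Bool.not_eq_true]
      rw [h4] at this
      rw [← hσ] at this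
      linarith
    apply hns
    refine ⟨fun z => if P z = true then D z / (1 - σ) else 0, ?_, ?_, ?_, ?_⟩
    · intro z
      by_cases h : P z = true <;> simp [h]
      exact div_nonneg (hnn z) (by linarith)
    · show ∑ z : Fin k → Bool, (if P z = true then D z / (1 - σ) else 0) = 1
      have hne : (1:ℝ) - σ ≠ 0 := by linarith
      rw [← Finset.sum_filter, ← Finset.sum_div, htrue, div_self hne]
    · intro T hT
      exfalso
      have h5 : T.card ≤ k := by
        have := Finset.card_le_univ T
        simpa using this
      omega
    · intro z hz
      by_contra h
      apply hz
      simp only [h]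
      simp
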